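/- (Lemma 2, second part.) Suppose X ∈ ℂ^{n1×n2} is the data matrix of the 2-D spectral model satisfying the incoherence property with parameter μ1, with enhanced form X_e = U Λ V* (compact SVD) and tangent-space projection P_T. Then for any two indices a, b ∈ {0,…,n1−1}×{0,…,n2−1}: |⟨A_b, P_T(A_a)⟩| ≤ √(ω_b/ω_a)·3·μ1·c_s·r/(n1 n2), where ⟨·,·⟩ is the Frobenius inner product. -/

import Mathlib

open scoped Classical
open Matrix

noncomputable section

namespace EMaC

/-- `e^{2π i f}` -/
def efreq (f : ℝ) : ℂ := Complex.exp (2 * Real.pi * Complex.I * (f : ℂ))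

/-- The data matrix of the 2-D spectral model:
`X_{k,l} = Σ_i d_i y_i^k z_i^l` with `y_i = e^{2πi f1 i}`, `z_i = e^{2πi f2 i}`. -/
def dataMatrix (n1 n2 r : ℕ) (d : Fin r → ℂ) (f1 f2 : Fin r → ℝ) :
    Matrix (Fin n1) (Fin n2) ℂ :=
  Matrix.of fun k l => ∑ i : Fin r, d i * efreq (f1 i) ^ (k : ℕ) * efreq (f2 i) ^ (l : ℕ)

/-- Frequencies lie in `[0,1)²` and the `r` frequency pairs are distinct. -/
structure SpectralModel (r : ℕ) (f1 f2 : Fin r → ℝ) : Prop where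
  f1_mem : ∀ i, f1 i ∈ Set.Ico (0 : ℝ) 1
  f2_mem : ∀ i, f2 i ∈ Set.Ico (0 : ℝ) 1
  distinct : Function.Injective fun i => (f1 i, f2 i)

/-- The two-fold Hankel enhanced form of an `n1 × n2` matrix, with pencil
parameters `k1, k2`. -/
def enhance {n1 n2 : ℕ} (k1 k2 : ℕ) (hk1 : k1 ≤ n1) (hk2 : k2 ≤ n2)
    (M : Matrix (Fin n1) (Fin n2) ℂ) :
    Matrix (Fin k1 × Fin k2) (Fin (n1 - k1 + 1) × Fin (n2 - k2 + 1)) ℂ :=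
  Matrix.of fun ip jq =>
    M ⟨ip.1.1 + jq.1.1, by have h1 := ip.1.isLt; have h2 := jq.1.isLt; omega⟩
      ⟨ip.2.1 + jq.2.1, by have h1 := ip.2.isLt; have h2 := jq.2.isLt; omega⟩

/-- The matrix `E_L`. -/
def EL (r k1 k2 : ℕ) (f1 f2 : Fin r → ℝ) : Matrix (Fin k1 × Fin k2) (Fin r) ℂ :=
  Matrix.of fun ip s =>
    efreq (f1 s) ^ (ip.1 : ℕ) * efreq (f2 s) ^ (ip.2 : ℕ) /
      (Real.sqrt ((k1 : ℝ) * k2) : ℂ)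

/-- The matrix `E_R`. -/
def ER (n1 n2 r k1 k2 : ℕ) (f1 f2 : Fin r → ℝ) :
    Matrix (Fin r) (Fin (n1 - k1 + 1) × Fin (n2 - k2 + 1)) ℂ :=
  Matrix.of fun s jq =>
    efreq (f1 s) ^ (jq.1 : ℕ) * efreq (f2 s) ^ (jq.2 : ℕ) /
      (Real.sqrt (((n1 - k1 + 1 : ℕ) : ℝ) * ((n2 - k2 + 1 : ℕ) : ℝ)) : ℂ)

/-- Smallest singular value of a square complex matrix. -/
def sigmaMin {n : Type*} [Fintype n] [DecidableEq n] (M : Matrix n n ℂ) : ℝ :=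
  ⨅ i, Real.sqrt ((Matrix.isHermitian_conjTranspose_mul_self M).eigenvalues i)

/-- The incoherence property with parameter `μ1`:
`σ_min(G_L) ≥ 1/μ1` and `σ_min(G_R) ≥ 1/μ1`, where `G_L = E_L* E_L` and
`G_R = (E_R E_R*)ᵀ`. -/
def Incoherent (n1 n2 r k1 k2 : ℕ) (f1 f2 : Fin r → ℝ) (μ1 : ℝ) : Prop :=
  1 / μ1 ≤ sigmaMin ((EL r k1 k2 f1 f2)ᴴ * EL r k1 k2 f1 f2) ∧
    1 / μ1 ≤ sigmaMin ((ER n1 n2 r k1 k2 f1 f2 * (ER n1 n2 r k1 k2 f1 f2)ᴴ)ᵀ)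

/-- `c_s = max{n1 n2/(k1 k2), n1 n2/((n1-k1+1)(n2-k2+1))}`. -/
def cs (n1 n2 k1 k2 : ℕ) : ℝ :=
  max (((n1 : ℝ) * n2) / ((k1 : ℝ) * k2))
    (((n1 : ℝ) * n2) / (((n1 - k1 + 1 : ℕ) : ℝ) * ((n2 - k2 + 1 : ℕ) : ℝ)))

/-- Nuclear norm: sum of singular values. -/
def nuclearNorm {p q : Type*} [Fintype p] [Fintype q] [DecidableEq q]
    (M : Matrix p q ℂ) : ℝ :=
  ∑ i, Real.sqrt ((Matrix.isHermitian_conjTranspose_mul_self M).eigenvalues i)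

/-- Spectral norm: largest singular value. -/
def specNorm {p q : Type*} [Fintype p] [Fintype q] [DecidableEq q]
    (M : Matrix p q ℂ) : ℝ :=
  ⨆ i, Real.sqrt ((Matrix.isHermitian_conjTranspose_mul_self M).eigenvalues i)

/-- Frobenius norm. -/
def frob {p q : Type*} [Fintype p] [Fintype q] (M : Matrix p q ℂ) : ℝ :=
  Real.sqrt (∑ i, ∑ j, ‖M i j‖ ^ 2)

/-- Frobenius inner product `⟨P,Q⟩ = Tr(P* Q)`. -/
def finner {p q : Type*} [Fintype p] [Fintype q] (P Q : Matrix p q ℂ) : ℂ :=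
  ∑ i, ∑ j, (starRingEnd ℂ) (P i j) * Q i j

/-- Elementwise ℓ1 norm. -/
def l1norm {p q : Type*} [Fintype p] [Fintype q] (M : Matrix p q ℂ) : ℝ :=
  ∑ i, ∑ j, ‖M i j‖

/-- `P_Ω`: keep entries on `Ω`, zero elsewhere. -/
def projOmega {n1 n2 : ℕ} (Ω : Finset (Fin n1 × Fin n2))
    (M : Matrix (Fin n1) (Fin n2) ℂ) : Matrix (Fin n1) (Fin n2) ℂ :=
  Matrix.of fun k l => if (k, l) ∈ Ω then M k l else 0

/-- `ω_{k,l} = |Ω_e(k,l)|`. -/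
def wcount (n1 n2 k1 k2 : ℕ) (a : Fin n1 × Fin n2) : ℕ :=
  (Finset.univ.filter fun e : (Fin k1 × Fin k2) × (Fin (n1 - k1 + 1) × Fin (n2 - k2 + 1)) =>
    e.1.1.1 + e.2.1.1 = (a.1 : ℕ) ∧ e.1.2.1 + e.2.2.1 = (a.2 : ℕ)).card

/-- The basis matrix `A_{(k,l)}`: `1/√ω_{k,l}` on `Ω_e(k,l)` and `0` elsewhere. -/
def Amat (n1 n2 k1 k2 : ℕ) (a : Fin n1 × Fin n2) :
    Matrix (Fin k1 × Fin k2) (Fin (n1 - k1 + 1) × Fin (n2 - k2 + 1)) ℂ :=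
  Matrix.of fun ip jq =>
    if ip.1.1 + jq.1.1 = (a.1 : ℕ) ∧ ip.2.1 + jq.2.1 = (a.2 : ℕ) then
      (((Real.sqrt (wcount n1 n2 k1 k2 a))⁻¹ : ℝ) : ℂ) else 0

/-- `A_a(M) = ⟨A_a, M⟩ A_a`. -/
def AopS (n1 n2 k1 k2 : ℕ) (a : Fin n1 × Fin n2)
    (M : Matrix (Fin k1 × Fin k2) (Fin (n1 - k1 + 1) × Fin (n2 - k2 + 1)) ℂ) :
    Matrix (Fin k1 × Fin k2) (Fin (n1 - k1 + 1) × Fin (n2 - k2 + 1)) ℂ :=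
  finner (Amat n1 n2 k1 k2 a) M • Amat n1 n2 k1 k2 a

/-- `A = Σ_{(k,l)} A_{(k,l)}`: the projection onto the span of the `A_{(k,l)}`. -/
def Aproj (n1 n2 k1 k2 : ℕ)
    (M : Matrix (Fin k1 × Fin k2) (Fin (n1 - k1 + 1) × Fin (n2 - k2 + 1)) ℂ) :
    Matrix (Fin k1 × Fin k2) (Fin (n1 - k1 + 1) × Fin (n2 - k2 + 1)) ℂ :=
  ∑ a : Fin n1 × Fin n2, AopS n1 n2 k1 k2 a M

/-- `Σ_{a ∈ s} A_a` over a (finite) set `s` of distinct indices. -/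
def AprojSet (n1 n2 k1 k2 : ℕ) (s : Finset (Fin n1 × Fin n2))
    (M : Matrix (Fin k1 × Fin k2) (Fin (n1 - k1 + 1) × Fin (n2 - k2 + 1)) ℂ) :
    Matrix (Fin k1 × Fin k2) (Fin (n1 - k1 + 1) × Fin (n2 - k2 + 1)) ℂ :=
  ∑ a ∈ s, AopS n1 n2 k1 k2 a M

/-- `A_Ω = Σ_{i} A_{a_i}` (with multiplicity) for a multiset of samples given
as a tuple `a : Fin m → Fin n1 × Fin n2`. -/
def AopTuple (n1 n2 k1 k2 m : ℕ) (a : Fin m → Fin n1 × Fin n2)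
    (M : Matrix (Fin k1 × Fin k2) (Fin (n1 - k1 + 1) × Fin (n2 - k2 + 1)) ℂ) :
    Matrix (Fin k1 × Fin k2) (Fin (n1 - k1 + 1) × Fin (n2 - k2 + 1)) ℂ :=
  ∑ i : Fin m, AopS n1 n2 k1 k2 (a i) M

/-- `P_T(M) = U U* M + M V V* − U U* M V V*`, the projection onto the
tangent space `T = {U M* + M̃ V*}`. -/
def projT {p q : Type*} [Fintype p] [Fintype q] {r' : ℕ}
    (U : Matrix p (Fin r') ℂ) (V : Matrix q (Fin r') ℂ) (M : Matrix p q ℂ) :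
    Matrix p q ℂ :=
  U * Uᴴ * M + M * (V * Vᴴ) - U * Uᴴ * M * (V * Vᴴ)

/-- `X_e = U Λ V*` is a compact SVD with positive singular values `σ`. -/
structure CompactSVD {p q : Type*} [Fintype p] [Fintype q] {r' : ℕ}
    (Xe : Matrix p q ℂ) (U : Matrix p (Fin r') ℂ) (σ : Fin r' → ℝ)
    (V : Matrix q (Fin r') ℂ) : Prop where
  U_orth : Uᴴ * U = 1
  V_orth : Vᴴ * V = 1
  sigma_pos : ∀ i, 0 < σ i
  decomp : Xe = U * Matrix.diagonal (fun i => ((σ i : ℝ) : ℂ)) * Vᴴ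

/-- `‖M‖_{A,2}²`. -/
def Anorm2sq (n1 n2 k1 k2 : ℕ)
    (M : Matrix (Fin k1 × Fin k2) (Fin (n1 - k1 + 1) × Fin (n2 - k2 + 1)) ℂ) : ℝ :=
  ∑ a : Fin n1 × Fin n2, ‖finner (Amat n1 n2 k1 k2 a) M‖ ^ 2 / (wcount n1 n2 k1 k2 a : ℝ)

/-- `‖M‖_{A,∞}`. -/
def AnormInf (n1 n2 k1 k2 : ℕ)
    (M : Matrix (Fin k1 × Fin k2) (Fin (n1 - k1 + 1) × Fin (n2 - k2 + 1)) ℂ) : ℝ :=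
  ⨆ a : Fin n1 × Fin n2,
    ‖finner (Amat n1 n2 k1 k2 a) M‖ / Real.sqrt (wcount n1 n2 k1 k2 a)

/-- Complex sign. -/
def csgn (z : ℂ) : ℂ := if z = 0 then 0 else z / (‖z‖ : ℂ)

/-- Entrywise complex sign of a matrix. -/
def matSgn {p q : Type*} (M : Matrix p q ℂ) : Matrix p q ℂ :=
  Matrix.of fun i j => csgn (M i j)

end EMaC

namespace EMaC

/-- The set of distinct sample locations of the sample tuple (multiset) `a`. -/
def sampleSet {n1 n2 m : ℕ} (a : Fin m → Fin n1 × Fin n2) : Finset (Fin n1 × Fin n2) :=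
  Finset.image a Finset.univ

/-- The set of distinct locations among the first `mclean` samples of `a`. -/
def cleanSet {n1 n2 m : ℕ} (mclean : ℕ) (a : Fin m → Fin n1 × Fin n2) :
    Finset (Fin n1 × Fin n2) :=
  Finset.image a (Finset.univ.filter fun i => (i : ℕ) < mclean)

/-- `Ω^dirty`: distinct locations of `a` not among the first `mclean` (clean) samples. -/
def dirtySet {n1 n2 m : ℕ} (mclean : ℕ) (a : Fin m → Fin n1 × Fin n2) :
    Finset (Fin n1 × Fin n2) :=
  sampleSet a \ cleanSet mclean a

/-- `A_{Ω^clean}` (with multiplicity): sum over the first `mclean` samples. -/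
def AopClean (n1 n2 k1 k2 m mclean : ℕ) (a : Fin m → Fin n1 × Fin n2)
    (M : Matrix (Fin k1 × Fin k2) (Fin (n1 - k1 + 1) × Fin (n2 - k2 + 1)) ℂ) :
    Matrix (Fin k1 × Fin k2) (Fin (n1 - k1 + 1) × Fin (n2 - k2 + 1)) ℂ :=
  ∑ i ∈ Finset.univ.filter (fun i : Fin m => (i : ℕ) < mclean), AopS n1 n2 k1 k2 (a i) M

/-- The Robust-EMaC objective `‖M_e‖_* + λ ‖Ŝ_e‖_1`. -/
def robustObj (n1 n2 k1 k2 : ℕ) (hk1' : k1 ≤ n1) (hk2' : k2 ≤ n2) (lam : ℝ)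
    (M S : Matrix (Fin n1) (Fin n2) ℂ) : ℝ :=
  nuclearNorm (enhance k1 k2 hk1' hk2' M) + lam * l1norm (enhance k1 k2 hk1' hk2' S)

/-- `(M̂, Ŝ)` is a minimizer of Robust-EMaC with observations `P_Ω(X + S)`. -/
def RobustMinimizer (n1 n2 k1 k2 : ℕ) (hk1' : k1 ≤ n1) (hk2' : k2 ≤ n2) (lam : ℝ)
    (Ω : Finset (Fin n1 × Fin n2)) (X S Mhat Shat : Matrix (Fin n1) (Fin n2) ℂ) : Prop :=
  projOmega Ω (Mhat + Shat) = projOmega Ω (X + S) ∧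
    ∀ M' S' : Matrix (Fin n1) (Fin n2) ℂ,
      projOmega Ω (M' + S') = projOmega Ω (X + S) →
      robustObj n1 n2 k1 k2 hk1' hk2' lam Mhat Shat ≤
        robustObj n1 n2 k1 k2 hk1' hk2' lam M' S'

/-- `X` is the unique solution of the EMaC program with observed entries `Ω`:
every feasible `M` is either `X` itself or has strictly larger enhanced
nuclear norm. -/
def UniqueEMaCSolution (n1 n2 k1 k2 : ℕ) (hk1' : k1 ≤ n1) (hk2' : k2 ≤ n2)
    (Ω : Finset (Fin n1 × Fin n2)) (X : Matrix (Fin n1) (Fin n2) ℂ) : Prop :=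
  ∀ M : Matrix (Fin n1) (Fin n2) ℂ,
    (∀ e ∈ Ω, M e.1 e.2 = X e.1 e.2) →
    M = X ∨
      nuclearNorm (enhance k1 k2 hk1' hk2' X) < nuclearNorm (enhance k1 k2 hk1' hk2' M)

/-- `sgn(S)` in the random-sign outlier model: the random sign `K` on `Ω^dirty`
and zero elsewhere. -/
def dirtySign {n1 n2 m : ℕ} (mclean : ℕ) (a : Fin m → Fin n1 × Fin n2)
    (K : Fin n1 × Fin n2 → ℂ) : Matrix (Fin n1) (Fin n2) ℂ :=
  Matrix.of fun α β => if (α, β) ∈ dirtySet mclean a then K (α, β) else 0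

end EMaC


namespace EMaCAux

open Matrix
open scoped ComplexOrder

lemma conj_mul_self_re (z : ℂ) : ((starRingEnd ℂ) z * z).re = ‖z‖ ^ 2 := by
  rw [← Complex.normSq_eq_conj_mul_self]
  simp [Complex.normSq_eq_norm_sq, ← Complex.ofReal_pow]

lemma mul_conj_self_re (z : ℂ) : (z * (starRingEnd ℂ) z).re = ‖z‖ ^ 2 := by
  rw [mul_comm]; exact conj_mul_self_re z

lemma dot_self_re {n : Type*} [Fintype n] (x : n → ℂ) :
    (star x ⬝ᵥ x).re = ∑ i, ‖x i‖ ^ 2 := by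
  simp only [dotProduct, Pi.star_apply, Complex.re_sum, RCLike.star_def]
  exact Finset.sum_congr rfl fun i _ => conj_mul_self_re (x i)

lemma rayleigh_lower {n : Type*} [Fintype n] [DecidableEq n] {A : Matrix n n ℂ}
    (hA : A.IsHermitian) {c : ℝ} (hc : ∀ i, c ≤ hA.eigenvalues i) (v : n → ℂ) :
    c * (∑ i, ‖v i‖ ^ 2) ≤ (star v ⬝ᵥ (A *ᵥ v)).re := by
  classical
  set W : Matrix n n ℂ := (hA.eigenvectorUnitary : Matrix n n ℂ) with hW
  set w : n → ℂ := (star W) *ᵥ v with hw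
  have hsv : star v ᵥ* W = star w := by
    rw [hw, star_mulVec, star_eq_conjTranspose, conjTranspose_conjTranspose]
  have key : star v ⬝ᵥ (A *ᵥ v)
      = star w ⬝ᵥ ((diagonal (RCLike.ofReal ∘ hA.eigenvalues) : Matrix n n ℂ) *ᵥ w) := by
    conv_lhs => rw [hA.spectral_theorem, Unitary.conjStarAlgAut_apply]
    rw [← mulVec_mulVec, ← mulVec_mulVec, dotProduct_mulVec, hsv]
  have hnorm : ∑ i, ‖w i‖ ^ 2 = ∑ i, ‖v i‖ ^ 2 := by
    rw [← dot_self_re, ← dot_self_re]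
    congr 1
    calc star w ⬝ᵥ w = (star v ᵥ* W) ⬝ᵥ ((star W) *ᵥ v) := by rw [hsv]
    _ = (star v ᵥ* (W * star W)) ⬝ᵥ v := by rw [dotProduct_mulVec, vecMul_vecMul]
    _ = star v ⬝ᵥ v := by
        rw [(Matrix.mem_unitaryGroup_iff).mp hA.eigenvectorUnitary.2, vecMul_one]
  rw [key]
  have hdot : (star w ⬝ᵥ ((diagonal (RCLike.ofReal ∘ hA.eigenvalues) : Matrix n n ℂ) *ᵥ w)).re
      = ∑ i, hA.eigenvalues i * ‖w i‖ ^ 2 := by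
    simp only [dotProduct, mulVec_diagonal, Pi.star_apply, Complex.re_sum, RCLike.star_def]
    refine Finset.sum_congr rfl fun i _ => ?_
    have : (starRingEnd ℂ) (w i) * ((RCLike.ofReal ∘ hA.eigenvalues) i * w i)
        = ((RCLike.ofReal (hA.eigenvalues i) : ℂ)) * ((starRingEnd ℂ) (w i) * w i) := by
      simp only [Function.comp_apply]; ring
    rw [this, ← Complex.normSq_eq_conj_mul_self]
    simp [Complex.normSq_eq_norm_sq, ← Complex.ofReal_pow]
  rw [hdot, ← hnorm, Finset.mul_sum]
  exact Finset.sum_le_sum fun i _ => by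
    have := hc i
    nlinarith [sq_nonneg ‖w i‖, norm_nonneg (w i)]

lemma eig_lower {n : Type*} [Fintype n] [DecidableEq n] {G : Matrix n n ℂ}
    (hpsd : G.PosSemidef)
    {c : ℝ}
    (hσ : ∀ v : n → ℂ, c ^ 2 * (∑ i, ‖v i‖ ^ 2) ≤ ∑ i, ‖(G *ᵥ v) i‖ ^ 2) :
    ∀ i, c ≤ hpsd.1.eigenvalues i := by
  intro i
  set u : n → ℂ := ⇑(hpsd.1.eigenvectorBasis i) with hu
  have hGu : G *ᵥ u = (hpsd.1.eigenvalues i : ℝ) • u := hpsd.1.mulVec_eigenvectorBasis i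
  have hu1 : ∑ j, ‖u j‖ ^ 2 = 1 := by
    have h1 : ‖hpsd.1.eigenvectorBasis i‖ = 1 := hpsd.1.eigenvectorBasis.orthonormal.1 i
    rw [EuclideanSpace.norm_eq] at h1
    have h2 : ∑ j, ‖u j‖ ^ 2 = ∑ j, ‖(hpsd.1.eigenvectorBasis i) j‖ ^ 2 := rfl
    rw [h2]
    have := congrArg (fun t : ℝ => t ^ 2) h1
    simpa [Real.sq_sqrt (Finset.sum_nonneg fun j _ => sq_nonneg _)] using this
  have h2 : ∑ j, ‖(G *ᵥ u) j‖ ^ 2 = (hpsd.1.eigenvalues i) ^ 2 := by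
    rw [hGu]
    simp only [Pi.smul_apply, norm_smul, Real.norm_eq_abs, mul_pow, sq_abs]
    rw [← Finset.mul_sum, hu1, mul_one]
  have h3 := hσ u
  rw [h2, hu1, mul_one] at h3
  have hlam := hpsd.eigenvalues_nonneg i
  nlinarith

lemma dot_norm_le {n : Type*} [Fintype n] (x y : n → ℂ) :
    ‖x ⬝ᵥ y‖ ≤ Real.sqrt (∑ i, ‖x i‖ ^ 2) * Real.sqrt (∑ i, ‖y i‖ ^ 2) := by
  calc ‖x ⬝ᵥ y‖ ≤ ∑ i, ‖x i‖ * ‖y i‖ :=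
        (norm_sum_le _ _).trans (Finset.sum_le_sum fun i _ => norm_mul_le _ _)
  _ ≤ Real.sqrt (∑ i, ‖x i‖ ^ 2) * Real.sqrt (∑ i, ‖y i‖ ^ 2) := by
      have h := Finset.sum_mul_sq_le_sq_mul_sq Finset.univ (fun i => ‖x i‖) (fun i => ‖y i‖)
      have hnn : (0:ℝ) ≤ ∑ i, ‖x i‖ * ‖y i‖ :=
        Finset.sum_nonneg fun i _ => mul_nonneg (norm_nonneg _) (norm_nonneg _)
      calc ∑ i, ‖x i‖ * ‖y i‖ = Real.sqrt ((∑ i, ‖x i‖ * ‖y i‖) ^ 2) := by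
            rw [Real.sqrt_sq hnn]
      _ ≤ Real.sqrt ((∑ i, ‖x i‖ ^ 2) * ∑ i, ‖y i‖ ^ 2) := Real.sqrt_le_sqrt h
      _ = _ := Real.sqrt_mul (Finset.sum_nonneg fun i _ => sq_nonneg _) _

lemma opBound_conjT {p q : Type*} [Fintype p] [Fintype q] (C : Matrix q p ℂ) {μ : ℝ} (hμ : 0 ≤ μ)
    (hC : ∀ u : p → ℂ, ∑ i, ‖(C *ᵥ u) i‖ ^ 2 ≤ μ * ∑ j, ‖u j‖ ^ 2) (y : q → ℂ) :
    ∑ j, ‖(Cᴴ *ᵥ y) j‖ ^ 2 ≤ μ * ∑ i, ‖y i‖ ^ 2 := by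
  set z : p → ℂ := Cᴴ *ᵥ y with hz
  set a : ℝ := ∑ j, ‖z j‖ ^ 2 with ha
  set b : ℝ := ∑ i, ‖y i‖ ^ 2 with hb
  have hannn : 0 ≤ a := Finset.sum_nonneg fun j _ => sq_nonneg _
  have hbnn : 0 ≤ b := Finset.sum_nonneg fun i _ => sq_nonneg _
  have key : a ≤ Real.sqrt μ * Real.sqrt a * Real.sqrt b := by
    have h1 : a = (star z ⬝ᵥ (Cᴴ *ᵥ y)).re := by rw [← hz, dot_self_re]
    have h2 : star (C *ᵥ z) ⬝ᵥ y = star z ⬝ᵥ (Cᴴ *ᵥ y) := by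
      conv_lhs => rw [star_mulVec]
      rw [← dotProduct_mulVec]
    have h3 : a ≤ ‖star (C *ᵥ z) ⬝ᵥ y‖ := by
      rw [h1, ← h2]; exact (Complex.re_le_norm _)
    have h4 : ‖star (C *ᵥ z) ⬝ᵥ y‖ ≤
        Real.sqrt (∑ i, ‖(C *ᵥ z) i‖ ^ 2) * Real.sqrt b := by
      have := dot_norm_le (star (C *ᵥ z)) y
      simpa using this
    have h5 : Real.sqrt (∑ i, ‖(C *ᵥ z) i‖ ^ 2) ≤ Real.sqrt (μ * a) :=
      Real.sqrt_le_sqrt (hC z)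
    have := h3.trans (h4.trans (by
      have := mul_le_mul_of_nonneg_right h5 (Real.sqrt_nonneg b)
      simpa [Real.sqrt_mul hμ] using this))
    linarith
  rcases eq_or_lt_of_le hannn with h0 | h0
  · rw [← h0]; positivity
  · have hsa : 0 < Real.sqrt a := Real.sqrt_pos.2 h0
    have h6 : Real.sqrt a * Real.sqrt a ≤ Real.sqrt μ * Real.sqrt a * Real.sqrt b := by
      rw [Real.mul_self_sqrt hannn]; exact key
    have h7 : Real.sqrt a ≤ Real.sqrt μ * Real.sqrt b := by
      exact (mul_le_mul_iff_of_pos_right hsa).1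
        (by linarith : Real.sqrt a * Real.sqrt a ≤ (Real.sqrt μ * Real.sqrt b) * Real.sqrt a)
    calc a = Real.sqrt a * Real.sqrt a := (Real.mul_self_sqrt hannn).symm
    _ ≤ (Real.sqrt μ * Real.sqrt b) * (Real.sqrt μ * Real.sqrt b) :=
        mul_le_mul h7 h7 (Real.sqrt_nonneg a) (by positivity)
    _ = μ * b := by
        rw [mul_mul_mul_comm, Real.mul_self_sqrt hμ, Real.mul_self_sqrt hbnn]

lemma mulVec_sq_bound {m k : Type*} [Fintype m] [Fintype k] [DecidableEq k]
    {G : Matrix m m ℂ} {C : Matrix m k ℂ} {μ : ℝ} (hμ : 0 < μ)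
    (hquad : ∀ v, (1/μ) * (∑ i, ‖v i‖ ^ 2) ≤ (star v ⬝ᵥ (G *ᵥ v)).re)
    (hI : Cᴴ * G * C = 1) (u : k → ℂ) :
    ∑ i, ‖(C *ᵥ u) i‖ ^ 2 ≤ μ * ∑ j, ‖u j‖ ^ 2 := by
  have h1 := hquad (C *ᵥ u)
  have h2 : star (C *ᵥ u) ⬝ᵥ (G *ᵥ (C *ᵥ u)) = star u ⬝ᵥ ((Cᴴ * G * C) *ᵥ u) := by
    rw [star_mulVec, mulVec_mulVec, dotProduct_mulVec, vecMul_vecMul, ← dotProduct_mulVec,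
      Matrix.mul_assoc]
  rw [h2, hI] at h1
  have h3 : (star u ⬝ᵥ ((1 : Matrix k k ℂ) *ᵥ u)).re = ∑ j, ‖u j‖ ^ 2 := by
    rw [Matrix.one_mulVec, dot_self_re]
  rw [h3] at h1
  have := mul_le_mul_of_nonneg_left h1 (le_of_lt hμ)
  rw [← mul_assoc, mul_one_div, div_self (ne_of_gt hμ), one_mul] at this
  exact this

lemma row_norm_bound {ι : Type*} [Fintype ι] {r r' : ℕ} (F : Matrix ι (Fin r) ℂ)
    (C : Matrix (Fin r) (Fin r') ℂ) {μ : ℝ}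
    (hCt : ∀ y : Fin r → ℂ, ∑ j, ‖(Cᴴ *ᵥ y) j‖ ^ 2 ≤ μ * ∑ i, ‖y i‖ ^ 2) (α : ι) :
    ∑ s, ‖(F * C) α s‖ ^ 2 ≤ μ * ∑ t, ‖F α t‖ ^ 2 := by
  have h := hCt (fun t => (starRingEnd ℂ) (F α t))
  have key : ∀ s, ‖(F * C) α s‖ = ‖(Cᴴ *ᵥ (fun t => (starRingEnd ℂ) (F α t))) s‖ := by
    intro s
    have : (Cᴴ *ᵥ (fun t => (starRingEnd ℂ) (F α t))) s = (starRingEnd ℂ) ((F * C) α s) := by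
      simp only [mulVec, dotProduct, conjTranspose_apply, Matrix.mul_apply, map_sum,
        _root_.map_mul, RCLike.star_def]
      exact Finset.sum_congr rfl fun t _ => mul_comm _ _
    rw [this, RCLike.norm_conj]
  calc ∑ s, ‖(F * C) α s‖ ^ 2 = ∑ s, ‖(Cᴴ *ᵥ (fun t => (starRingEnd ℂ) (F α t))) s‖ ^ 2 :=
        Finset.sum_congr rfl fun s _ => by rw [key s]
  _ ≤ μ * ∑ t, ‖(starRingEnd ℂ) (F α t)‖ ^ 2 := h
  _ = μ * ∑ t, ‖F α t‖ ^ 2 := by simp [RCLike.norm_conj]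

lemma quad_lower_of_sigmaMin {n : Type*} [Fintype n] [DecidableEq n] [Nonempty n]
    {G : Matrix n n ℂ} (hpsd : G.PosSemidef) {μ : ℝ} (hμ : 0 < μ)
    (h : 1 / μ ≤ EMaC.sigmaMin G) (v : n → ℂ) :
    (1 / μ) * ∑ i, ‖v i‖ ^ 2 ≤ (star v ⬝ᵥ (G *ᵥ v)).re := by
  have hGG := Matrix.isHermitian_conjTranspose_mul_self G
  have h1 : ∀ i, 1 / μ ≤ Real.sqrt (hGG.eigenvalues i) := fun i =>
    h.trans (ciInf_le (Set.finite_range _).bddBelow i)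
  have heig2 : ∀ i, (1 / μ) ^ 2 ≤ hGG.eigenvalues i := by
    intro i
    have hnn : 0 ≤ hGG.eigenvalues i :=
      (Matrix.posSemidef_conjTranspose_mul_self G).eigenvalues_nonneg i
    have h2 := h1 i
    calc (1 / μ) ^ 2 ≤ (Real.sqrt (hGG.eigenvalues i)) ^ 2 :=
          pow_le_pow_left₀ (by positivity) h2 2
    _ = hGG.eigenvalues i := Real.sq_sqrt hnn
  have hquad2 : ∀ w : n → ℂ, (1 / μ) ^ 2 * ∑ i, ‖w i‖ ^ 2 ≤ ∑ i, ‖(G *ᵥ w) i‖ ^ 2 := by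
    intro w
    have hr := rayleigh_lower hGG heig2 w
    have e : star (G *ᵥ w) ⬝ᵥ (G *ᵥ w) = star w ⬝ᵥ ((Gᴴ * G) *ᵥ w) := by
      conv_lhs => rw [star_mulVec]
      rw [← dotProduct_mulVec, mulVec_mulVec]
    have e2 : ∑ i, ‖(G *ᵥ w) i‖ ^ 2 = (star w ⬝ᵥ ((Gᴴ * G) *ᵥ w)).re := by
      rw [← e, dot_self_re]
    rw [e2]
    exact hr
  have helow := eig_lower hpsd hquad2
  exact rayleigh_lower hpsd.1 helow v

lemma quad_transpose {n : Type*} [Fintype n] (M : Matrix n n ℂ) (w : n → ℂ) :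
    star w ⬝ᵥ (M *ᵥ w) = star (star w) ⬝ᵥ (Mᵀ *ᵥ (star w)) := by
  simp only [dotProduct, mulVec, Pi.star_apply, transpose_apply, star_star,
    Finset.mul_sum]
  rw [Finset.sum_comm]
  exact Finset.sum_congr rfl fun i _ => Finset.sum_congr rfl fun j _ => by ring

lemma cs_filter_sum {A B : Type*} [Fintype A] [Fintype B] (S : Finset (A × B))
    (hinj1 : ∀ x ∈ S, ∀ y ∈ S, x.1 = y.1 → x = y)
    (hinj2 : ∀ x ∈ S, ∀ y ∈ S, x.2 = y.2 → x = y)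
    (f : A → ℝ) (g : B → ℝ) (hf : ∀ x, 0 ≤ f x) (hg : ∀ x, 0 ≤ g x) :
    ∑ x ∈ S, f x.1 * g x.2 ≤ Real.sqrt (∑ α, f α ^ 2) * Real.sqrt (∑ β, g β ^ 2) := by
  classical
  have h1 : (∑ x ∈ S, f x.1 * g x.2) ^ 2 ≤ (∑ x ∈ S, f x.1 ^ 2) * (∑ x ∈ S, g x.2 ^ 2) :=
    Finset.sum_mul_sq_le_sq_mul_sq S (fun x => f x.1) (fun x => g x.2)
  have h2 : ∑ x ∈ S, f x.1 ^ 2 ≤ ∑ α, f α ^ 2 := by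
    rw [show (∑ x ∈ S, f x.1 ^ 2) = ∑ α ∈ S.image Prod.fst, f α ^ 2 from
      (Finset.sum_image (f := fun a => f a ^ 2) hinj1).symm]
    exact Finset.sum_le_sum_of_subset_of_nonneg (Finset.subset_univ _)
      (fun α _ _ => sq_nonneg _)
  have h3 : ∑ x ∈ S, g x.2 ^ 2 ≤ ∑ β, g β ^ 2 := by
    rw [show (∑ x ∈ S, g x.2 ^ 2) = ∑ β ∈ S.image Prod.snd, g β ^ 2 from
      (Finset.sum_image (f := fun b => g b ^ 2) hinj2).symm]
    exact Finset.sum_le_sum_of_subset_of_nonneg (Finset.subset_univ _)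
      (fun β _ _ => sq_nonneg _)
  have hnn : (0:ℝ) ≤ ∑ x ∈ S, f x.1 * g x.2 :=
    Finset.sum_nonneg fun x _ => mul_nonneg (hf _) (hg _)
  have hfS : (0:ℝ) ≤ ∑ x ∈ S, f x.1 ^ 2 := Finset.sum_nonneg fun x _ => sq_nonneg _
  have hgU : (0:ℝ) ≤ ∑ β, g β ^ 2 := Finset.sum_nonneg fun x _ => sq_nonneg _
  calc ∑ x ∈ S, f x.1 * g x.2 = Real.sqrt ((∑ x ∈ S, f x.1 * g x.2) ^ 2) :=
        (Real.sqrt_sq hnn).symm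
  _ ≤ Real.sqrt ((∑ α, f α ^ 2) * (∑ β, g β ^ 2)) := by
      apply Real.sqrt_le_sqrt
      calc (∑ x ∈ S, f x.1 * g x.2) ^ 2 ≤ (∑ x ∈ S, f x.1 ^ 2) * (∑ x ∈ S, g x.2 ^ 2) := h1
      _ ≤ (∑ α, f α ^ 2) * (∑ β, g β ^ 2) :=
          mul_le_mul h2 h3 (Finset.sum_nonneg fun x _ => sq_nonneg _) (by positivity)
  _ = _ := Real.sqrt_mul (by positivity) _

end EMaCAux


namespace EMaCAux

open Matrix EMaC

lemma norm_efreq (f : ℝ) : ‖efreq f‖ = 1 := by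
  rw [efreq, Complex.norm_exp]
  have : (2 * (Real.pi : ℂ) * Complex.I * (f : ℂ)).re = 0 := by
    simp [Complex.mul_re, Complex.mul_im]
  rw [this, Real.exp_zero]

lemma wcount_pos {n1 n2 k1 k2 : ℕ} (hk1 : 1 ≤ k1) (hk1' : k1 ≤ n1)
    (hk2 : 1 ≤ k2) (hk2' : k2 ≤ n2) (a : Fin n1 × Fin n2) :
    0 < wcount n1 n2 k1 k2 a := by
  rw [wcount, Finset.card_pos]
  have h1 := a.1.isLt
  have h2 := a.2.isLt
  refine ⟨((⟨min a.1.1 (k1-1), by omega⟩, ⟨min a.2.1 (k2-1), by omega⟩),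
    (⟨a.1.1 - min a.1.1 (k1-1), by omega⟩, ⟨a.2.1 - min a.2.1 (k2-1), by omega⟩)), ?_⟩
  simp only [Finset.mem_filter, Finset.mem_univ, true_and]
  exact ⟨by omega, by omega⟩

lemma norm_Amat {n1 n2 k1 k2 : ℕ} (a : Fin n1 × Fin n2) (β : Fin k1 × Fin k2)
    (γ : Fin (n1 - k1 + 1) × Fin (n2 - k2 + 1)) :
    ‖Amat n1 n2 k1 k2 a β γ‖ =
      if (β.1.1 + γ.1.1 = (a.1 : ℕ) ∧ β.2.1 + γ.2.1 = (a.2 : ℕ)) then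
        (Real.sqrt (wcount n1 n2 k1 k2 a))⁻¹ else 0 := by
  by_cases h : (β.1.1 + γ.1.1 = (a.1 : ℕ) ∧ β.2.1 + γ.2.1 = (a.2 : ℕ)) <;>
    simp [Amat, h, abs_of_nonneg, Real.sqrt_nonneg]

lemma sum_col_Amat {n1 n2 k1 k2 : ℕ} (a : Fin n1 × Fin n2)
    (γ : Fin (n1 - k1 + 1) × Fin (n2 - k2 + 1)) :
    ∑ β : Fin k1 × Fin k2, ‖Amat n1 n2 k1 k2 a β γ‖ ≤
      (Real.sqrt (wcount n1 n2 k1 k2 a))⁻¹ := by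
  classical
  set sa := (Real.sqrt (wcount n1 n2 k1 k2 a))⁻¹ with hsa
  have hsa0 : 0 ≤ sa := by positivity
  calc ∑ β : Fin k1 × Fin k2, ‖Amat n1 n2 k1 k2 a β γ‖
      = ∑ β ∈ Finset.univ.filter
          (fun β : Fin k1 × Fin k2 => β.1.1 + γ.1.1 = (a.1 : ℕ) ∧ β.2.1 + γ.2.1 = (a.2 : ℕ)),
          sa := by
        rw [Finset.sum_filter]
        exact Finset.sum_congr rfl fun β _ => norm_Amat a β γ
  _ = (Finset.univ.filter
        (fun β : Fin k1 × Fin k2 => β.1.1 + γ.1.1 = (a.1 : ℕ) ∧ β.2.1 + γ.2.1 = (a.2 : ℕ))).card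
        * sa := by rw [Finset.sum_const, nsmul_eq_mul]
  _ ≤ 1 * sa := by
      apply mul_le_mul_of_nonneg_right _ hsa0
      have : (Finset.univ.filter
          (fun β : Fin k1 × Fin k2 => β.1.1 + γ.1.1 = (a.1 : ℕ) ∧ β.2.1 + γ.2.1 = (a.2 : ℕ))).card ≤ 1 := by
        apply Finset.card_le_one.mpr
        intro x hx y hy
        simp only [Finset.mem_filter] at hx hy
        exact Prod.ext (Fin.ext (by omega)) (Fin.ext (by omega))
      exact_mod_cast this
  _ = sa := one_mul sa

lemma sum_row_Amat {n1 n2 k1 k2 : ℕ} (a : Fin n1 × Fin n2) (β : Fin k1 × Fin k2) :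
    ∑ γ : Fin (n1 - k1 + 1) × Fin (n2 - k2 + 1), ‖Amat n1 n2 k1 k2 a β γ‖ ≤
      (Real.sqrt (wcount n1 n2 k1 k2 a))⁻¹ := by
  classical
  set sa := (Real.sqrt (wcount n1 n2 k1 k2 a))⁻¹ with hsa
  have hsa0 : 0 ≤ sa := by positivity
  calc ∑ γ : Fin (n1 - k1 + 1) × Fin (n2 - k2 + 1), ‖Amat n1 n2 k1 k2 a β γ‖
      = ∑ γ ∈ Finset.univ.filter
          (fun γ : Fin (n1 - k1 + 1) × Fin (n2 - k2 + 1) =>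
            β.1.1 + γ.1.1 = (a.1 : ℕ) ∧ β.2.1 + γ.2.1 = (a.2 : ℕ)), sa := by
        rw [Finset.sum_filter]
        exact Finset.sum_congr rfl fun γ _ => norm_Amat a β γ
  _ = (Finset.univ.filter
        (fun γ : Fin (n1 - k1 + 1) × Fin (n2 - k2 + 1) =>
          β.1.1 + γ.1.1 = (a.1 : ℕ) ∧ β.2.1 + γ.2.1 = (a.2 : ℕ))).card * sa := by
        rw [Finset.sum_const, nsmul_eq_mul]
  _ ≤ 1 * sa := by
      apply mul_le_mul_of_nonneg_right _ hsa0
      have : (Finset.univ.filter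
          (fun γ : Fin (n1 - k1 + 1) × Fin (n2 - k2 + 1) =>
            β.1.1 + γ.1.1 = (a.1 : ℕ) ∧ β.2.1 + γ.2.1 = (a.2 : ℕ))).card ≤ 1 := by
        apply Finset.card_le_one.mpr
        intro x hx y hy
        simp only [Finset.mem_filter] at hx hy
        exact Prod.ext (Fin.ext (by omega)) (Fin.ext (by omega))
      exact_mod_cast this
  _ = sa := one_mul sa

lemma sum_tot_Amat {n1 n2 k1 k2 : ℕ} (b : Fin n1 × Fin n2) :
    ∑ α : Fin k1 × Fin k2, ∑ γ : Fin (n1 - k1 + 1) × Fin (n2 - k2 + 1),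
        ‖Amat n1 n2 k1 k2 b α γ‖
      = (wcount n1 n2 k1 k2 b : ℝ) * (Real.sqrt (wcount n1 n2 k1 k2 b))⁻¹ := by
  classical
  set sb := (Real.sqrt (wcount n1 n2 k1 k2 b))⁻¹ with hsb
  calc ∑ α : Fin k1 × Fin k2, ∑ γ : Fin (n1 - k1 + 1) × Fin (n2 - k2 + 1),
        ‖Amat n1 n2 k1 k2 b α γ‖
      = ∑ α : Fin k1 × Fin k2, ∑ γ : Fin (n1 - k1 + 1) × Fin (n2 - k2 + 1),
          if (α.1.1 + γ.1.1 = (b.1 : ℕ) ∧ α.2.1 + γ.2.1 = (b.2 : ℕ)) then sb else 0 :=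
        Finset.sum_congr rfl fun α _ => Finset.sum_congr rfl fun γ _ => norm_Amat b α γ
  _ = ∑ e : (Fin k1 × Fin k2) × (Fin (n1 - k1 + 1) × Fin (n2 - k2 + 1)),
          if (e.1.1.1 + e.2.1.1 = (b.1 : ℕ) ∧ e.1.2.1 + e.2.2.1 = (b.2 : ℕ)) then sb else 0 := by
        exact (Fintype.sum_prod_type
          (f := fun e : (Fin k1 × Fin k2) × (Fin (n1 - k1 + 1) × Fin (n2 - k2 + 1)) =>
            if (e.1.1.1 + e.2.1.1 = (b.1 : ℕ) ∧ e.1.2.1 + e.2.2.1 = (b.2 : ℕ)) then sb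
            else 0)).symm
  _ = ∑ e ∈ Finset.univ.filter
        (fun e : (Fin k1 × Fin k2) × (Fin (n1 - k1 + 1) × Fin (n2 - k2 + 1)) =>
          e.1.1.1 + e.2.1.1 = (b.1 : ℕ) ∧ e.1.2.1 + e.2.2.1 = (b.2 : ℕ)), sb := by
        rw [Finset.sum_filter]
  _ = (wcount n1 n2 k1 k2 b : ℝ) * sb := by
        rw [Finset.sum_const, nsmul_eq_mul, wcount]

lemma aux_div (A B D C1 C2 : ℂ) (h1 : C1 ≠ 0) (h2 : C2 ≠ 0) :
    A / C1 * (C1 * C2 * D) * (B / C2) = D * A * B := by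
  field_simp

lemma aux_K (μ N x rr : ℝ) (hN : 0 < N) (hx : 0 < x) :
    μ * (N / x) * rr / N = μ * (rr / x) := by
  field_simp

end EMaCAux

open scoped ComplexOrder

set_option maxHeartbeats 1000000 in
open EMaC in
/-- Lemma 2, second part: under the incoherence property, for any
two entry locations `a, b`,
`|⟨A_b, P_T(A_a)⟩| ≤ √(ω_b/ω_a) · 3 μ1 c_s r/(n1 n2)`. -/
theorem incoherence_tangent_crosstalk_bound
    (n1 n2 r r' k1 k2 : ℕ) (hn1 : 0 < n1) (hn2 : 0 < n2) (hr : 0 < r)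
    (hk1 : 1 ≤ k1) (hk1' : k1 ≤ n1) (hk2 : 1 ≤ k2) (hk2' : k2 ≤ n2)
    (d : Fin r → ℂ) (f1 f2 : Fin r → ℝ)
    (hmodel : SpectralModel r f1 f2)
    (μ1 : ℝ) (hμ1 : 0 < μ1)
    (hinc : Incoherent n1 n2 r k1 k2 f1 f2 μ1)
    (U : Matrix (Fin k1 × Fin k2) (Fin r') ℂ) (σ : Fin r' → ℝ)
    (V : Matrix (Fin (n1 - k1 + 1) × Fin (n2 - k2 + 1)) (Fin r') ℂ)
    (hsvd : CompactSVD (enhance k1 k2 hk1' hk2' (dataMatrix n1 n2 r d f1 f2)) U σ V) :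
    ∀ a b : Fin n1 × Fin n2,
      ‖finner (Amat n1 n2 k1 k2 b) (projT U V (Amat n1 n2 k1 k2 a))‖ ≤
        Real.sqrt ((wcount n1 n2 k1 k2 b : ℝ) / (wcount n1 n2 k1 k2 a : ℝ)) *
          (3 * μ1 * cs n1 n2 k1 k2 * r / ((n1 : ℝ) * n2)) := by
  classical
  haveI : Nonempty (Fin r) := Fin.pos_iff_nonempty.mp hr
  obtain ⟨hUo, hVo, hσpos, hdec⟩ := hsvd
  intro a b
  set ELm := EL r k1 k2 f1 f2 with hELm
  set ERm := ER n1 n2 r k1 k2 f1 f2 with hERm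
  have hk1R : (0:ℝ) < (k1:ℝ) * k2 := by
    have h1 : (0:ℝ) < (k1:ℝ) := by exact_mod_cast hk1
    have h2 : (0:ℝ) < (k2:ℝ) := by exact_mod_cast hk2
    positivity
  have hm1R : (0:ℝ) < ((n1 - k1 + 1 : ℕ):ℝ) * ((n2 - k2 + 1 : ℕ):ℝ) := by
    have h1 : (0:ℝ) < ((n1 - k1 + 1 : ℕ):ℝ) := by exact_mod_cast Nat.succ_pos _
    have h2 : (0:ℝ) < ((n2 - k2 + 1 : ℕ):ℝ) := by exact_mod_cast Nat.succ_pos _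
    positivity
  have hn1n2 : (0:ℝ) < (n1:ℝ) * n2 := by
    have h1 : (0:ℝ) < (n1:ℝ) := by exact_mod_cast hn1
    have h2 : (0:ℝ) < (n2:ℝ) := by exact_mod_cast hn2
    positivity
  have hc1 : (0:ℝ) < Real.sqrt ((k1:ℝ)*k2) := Real.sqrt_pos.mpr hk1R
  have hc2 : (0:ℝ) < Real.sqrt (((n1 - k1 + 1 : ℕ):ℝ) * ((n2 - k2 + 1 : ℕ):ℝ)) :=
    Real.sqrt_pos.mpr hm1R
  set Dc : Matrix (Fin r) (Fin r) ℂ := Matrix.diagonal (fun s =>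
    ((Real.sqrt ((k1:ℝ)*k2) * Real.sqrt (((n1 - k1 + 1 : ℕ):ℝ) * ((n2 - k2 + 1 : ℕ):ℝ)) : ℝ) : ℂ)
      * d s) with hDc
  set Lam : Matrix (Fin r') (Fin r') ℂ := Matrix.diagonal (fun i => ((σ i : ℝ) : ℂ)) with hLam
  set Lami : Matrix (Fin r') (Fin r') ℂ :=
    Matrix.diagonal (fun i => (((σ i)⁻¹ : ℝ) : ℂ)) with hLami
  have hLL : Lam * Lami = 1 := by
    have hfun : (fun i => ((σ i : ℝ) : ℂ) * (((σ i)⁻¹ : ℝ) : ℂ)) = fun _ : Fin r' => (1:ℂ) := by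
      funext i
      rw [← Complex.ofReal_mul, mul_inv_cancel₀ (hσpos i).ne']
      simp
    rw [hLam, hLami, Matrix.diagonal_mul_diagonal, hfun, Matrix.diagonal_one]
  have hXe : enhance k1 k2 hk1' hk2' (dataMatrix n1 n2 r d f1 f2) = ELm * Dc * ERm := by
    ext ip jq
    have hmul : (ELm * Dc * ERm) ip jq = ∑ t, (ELm ip t *
        (((Real.sqrt ((k1:ℝ)*k2) * Real.sqrt (((n1 - k1 + 1 : ℕ):ℝ) * ((n2 - k2 + 1 : ℕ):ℝ)) : ℝ) : ℂ)
          * d t)) * ERm t jq := by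
      rw [Matrix.mul_apply]
      exact Finset.sum_congr rfl fun t _ => by rw [Matrix.mul_diagonal]
    rw [hmul]
    simp only [enhance, dataMatrix, Matrix.of_apply, hELm, hERm, EL, ER]
    refine Finset.sum_congr rfl fun t _ => ?_
    have h1 : (Real.sqrt ((k1:ℝ)*k2) : ℂ) ≠ 0 := Complex.ofReal_ne_zero.mpr hc1.ne'
    have h2 : ((Real.sqrt (((n1 - k1 + 1 : ℕ):ℝ) * ((n2 - k2 + 1 : ℕ):ℝ)) : ℝ) : ℂ) ≠ 0 :=
      Complex.ofReal_ne_zero.mpr hc2.ne'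
    rw [pow_add, pow_add, Complex.ofReal_mul, EMaCAux.aux_div _ _ _ _ _ h1 h2]
    ring
  set CU : Matrix (Fin r) (Fin r') ℂ := Dc * ERm * V * Lami with hCU
  set CV : Matrix (Fin r) (Fin r') ℂ := Dcᴴ * ELmᴴ * U * Lami with hCV
  have hU : U = ELm * CU := by
    have h1 : ELm * Dc * ERm * V * Lami = U * Lam * Vᴴ * V * Lami := by rw [← hXe, ← hdec]
    have h2 : U * Lam * Vᴴ * V * Lami = U := by
      rw [Matrix.mul_assoc (U * Lam) Vᴴ V, hVo, Matrix.mul_one, Matrix.mul_assoc, hLL,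
        Matrix.mul_one]
    calc U = U * Lam * Vᴴ * V * Lami := h2.symm
    _ = ELm * Dc * ERm * V * Lami := h1.symm
    _ = ELm * CU := by rw [hCU]; simp only [Matrix.mul_assoc]
  have hV : V = ERmᴴ * CV := by
    have hXeH : (enhance k1 k2 hk1' hk2' (dataMatrix n1 n2 r d f1 f2))ᴴ
        = ERmᴴ * Dcᴴ * ELmᴴ := by
      rw [hXe, Matrix.conjTranspose_mul, Matrix.conjTranspose_mul]
      simp only [Matrix.mul_assoc]
    have hLamH : Lamᴴ = Lam := by
      have hst : star (fun i => ((σ i : ℝ) : ℂ)) = fun i => ((σ i : ℝ) : ℂ) := by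
        funext i
        simp [Complex.star_def, Complex.conj_ofReal]
      rw [hLam, Matrix.diagonal_conjTranspose, hst]
    have hdecH : (enhance k1 k2 hk1' hk2' (dataMatrix n1 n2 r d f1 f2))ᴴ = V * Lam * Uᴴ := by
      rw [hdec, Matrix.conjTranspose_mul, Matrix.conjTranspose_mul,
        Matrix.conjTranspose_conjTranspose, hLamH]
      simp only [Matrix.mul_assoc]
    have h1 : ERmᴴ * Dcᴴ * ELmᴴ * U * Lami = V * Lam * Uᴴ * U * Lami := by
      rw [← hXeH, hdecH]
    have h2 : V * Lam * Uᴴ * U * Lami = V := by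
      rw [Matrix.mul_assoc (V * Lam) Uᴴ U, hUo, Matrix.mul_one, Matrix.mul_assoc, hLL,
        Matrix.mul_one]
    calc V = V * Lam * Uᴴ * U * Lami := h2.symm
    _ = ERmᴴ * Dcᴴ * ELmᴴ * U * Lami := h1.symm
    _ = ERmᴴ * CV := by rw [hCV]; simp only [Matrix.mul_assoc]
  have hGU : CUᴴ * (ELmᴴ * ELm) * CU = 1 := by
    have h1 : (ELm * CU)ᴴ * (ELm * CU) = 1 := by rw [← hU]; exact hUo
    rw [Matrix.conjTranspose_mul] at h1
    rw [← h1]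
    simp only [Matrix.mul_assoc]
  have hGV : CVᴴ * (ERm * ERmᴴ) * CV = 1 := by
    have h1 : (ERmᴴ * CV)ᴴ * (ERmᴴ * CV) = 1 := by rw [← hV]; exact hVo
    rw [Matrix.conjTranspose_mul, Matrix.conjTranspose_conjTranspose] at h1
    rw [← h1]
    simp only [Matrix.mul_assoc]
  -- quadratic form lower bounds from incoherence
  have hqL : ∀ v : Fin r → ℂ, (1/μ1) * ∑ i, ‖v i‖ ^ 2 ≤
      (star v ⬝ᵥ ((ELmᴴ * ELm) *ᵥ v)).re :=
    EMaCAux.quad_lower_of_sigmaMin (Matrix.posSemidef_conjTranspose_mul_self ELm) hμ1 hinc.1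
  have hqRT : ∀ v : Fin r → ℂ, (1/μ1) * ∑ i, ‖v i‖ ^ 2 ≤
      (star v ⬝ᵥ (((ERm * ERmᴴ)ᵀ) *ᵥ v)).re :=
    EMaCAux.quad_lower_of_sigmaMin
      ((Matrix.posSemidef_self_mul_conjTranspose ERm).transpose) hμ1 hinc.2
  have hqR : ∀ w : Fin r → ℂ, (1/μ1) * ∑ i, ‖w i‖ ^ 2 ≤
      (star w ⬝ᵥ ((ERm * ERmᴴ) *ᵥ w)).re := by
    intro w
    have h1 := hqRT (star w)
    rw [← EMaCAux.quad_transpose] at h1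
    simpa using h1
  have hCUb := EMaCAux.mulVec_sq_bound hμ1 hqL hGU
  have hCVb := EMaCAux.mulVec_sq_bound hμ1 hqR hGV
  have hCUt := EMaCAux.opBound_conjT CU hμ1.le hCUb
  have hCVt := EMaCAux.opBound_conjT CV hμ1.le hCVb
  -- diagonal bounds
  set K : ℝ := μ1 * cs n1 n2 k1 k2 * r / ((n1:ℝ) * n2) with hKdef
  have hcs0 : 0 ≤ cs n1 n2 k1 k2 :=
    le_trans (le_of_lt (div_pos hn1n2 hk1R)) (le_max_left _ _)
  have hK0 : 0 ≤ K := by rw [hKdef]; positivity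
  have hUdiag : ∀ α, ∑ s, ‖U α s‖ ^ 2 ≤ K := by
    intro α
    have h := EMaCAux.row_norm_bound ELm CU hCUt α
    rw [← hU] at h
    have hrow : ∑ t, ‖ELm α t‖ ^ 2 = (r:ℝ) / ((k1:ℝ)*k2) := by
      have he : ∀ t, ‖ELm α t‖ ^ 2 = 1 / ((k1:ℝ)*k2) := by
        intro t
        rw [hELm]
        simp only [EL, Matrix.of_apply]
        rw [norm_div, norm_mul, norm_pow, norm_pow, EMaCAux.norm_efreq, EMaCAux.norm_efreq,
          one_pow, one_pow, one_mul, Complex.norm_real, Real.norm_eq_abs,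
          abs_of_nonneg (Real.sqrt_nonneg _)]
        rw [div_pow, one_pow, Real.sq_sqrt hk1R.le]
      rw [Finset.sum_congr rfl fun t _ => he t, Finset.sum_const, Finset.card_univ,
        Fintype.card_fin, nsmul_eq_mul]
      ring
    rw [hrow] at h
    refine h.trans ?_
    have hcsL : ((n1:ℝ) * n2) / ((k1:ℝ)*k2) ≤ cs n1 n2 k1 k2 := le_max_left _ _
    have e : μ1 * (((n1:ℝ) * n2) / ((k1:ℝ)*k2)) * r / ((n1:ℝ)*n2)
        = μ1 * ((r:ℝ) / ((k1:ℝ)*k2)) :=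
      EMaCAux.aux_K μ1 ((n1:ℝ)*n2) ((k1:ℝ)*k2) r hn1n2 hk1R
    rw [hKdef, ← e]
    gcongr
  have hVdiag : ∀ γ, ∑ s, ‖V γ s‖ ^ 2 ≤ K := by
    intro γ
    have h := EMaCAux.row_norm_bound ERmᴴ CV hCVt γ
    rw [← hV] at h
    have hrow : ∑ t, ‖ERmᴴ γ t‖ ^ 2
        = (r:ℝ) / (((n1 - k1 + 1 : ℕ):ℝ) * ((n2 - k2 + 1 : ℕ):ℝ)) := by
      have he : ∀ t, ‖ERmᴴ γ t‖ ^ 2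
          = 1 / (((n1 - k1 + 1 : ℕ):ℝ) * ((n2 - k2 + 1 : ℕ):ℝ)) := by
        intro t
        rw [Matrix.conjTranspose_apply, norm_star, hERm]
        simp only [ER, Matrix.of_apply]
        rw [norm_div, norm_mul, norm_pow, norm_pow, EMaCAux.norm_efreq, EMaCAux.norm_efreq,
          one_pow, one_pow, one_mul, Complex.norm_real, Real.norm_eq_abs,
          abs_of_nonneg (Real.sqrt_nonneg _)]
        rw [div_pow, one_pow, Real.sq_sqrt hm1R.le]
      rw [Finset.sum_congr rfl fun t _ => he t, Finset.sum_const, Finset.card_univ,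
        Fintype.card_fin, nsmul_eq_mul]
      ring
    rw [hrow] at h
    refine h.trans ?_
    have hcsR : ((n1:ℝ) * n2) / (((n1 - k1 + 1 : ℕ):ℝ) * ((n2 - k2 + 1 : ℕ):ℝ))
        ≤ cs n1 n2 k1 k2 := le_max_right _ _
    have e : μ1 * (((n1:ℝ) * n2) / (((n1 - k1 + 1 : ℕ):ℝ) * ((n2 - k2 + 1 : ℕ):ℝ))) * r
          / ((n1:ℝ)*n2)
        = μ1 * ((r:ℝ) / (((n1 - k1 + 1 : ℕ):ℝ) * ((n2 - k2 + 1 : ℕ):ℝ))) :=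
      EMaCAux.aux_K μ1 ((n1:ℝ)*n2) (((n1 - k1 + 1 : ℕ):ℝ) * ((n2 - k2 + 1 : ℕ):ℝ)) r hn1n2 hm1R
    rw [hKdef, ← e]
    gcongr
  -- projector entry bounds
  set P : Matrix (Fin k1 × Fin k2) (Fin k1 × Fin k2) ℂ := U * Uᴴ with hP
  set Q : Matrix (Fin (n1-k1+1) × Fin (n2-k2+1)) (Fin (n1-k1+1) × Fin (n2-k2+1)) ℂ
    := V * Vᴴ with hQ
  have hPentry : ∀ α β', ‖P α β'‖ ≤ K := by
    intro α β'
    have he : P α β' = (fun s => U α s) ⬝ᵥ (fun s => (starRingEnd ℂ) (U β' s)) := by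
      rw [hP, Matrix.mul_apply]
      exact Finset.sum_congr rfl fun s _ => by
        rw [Matrix.conjTranspose_apply, RCLike.star_def]
    rw [he]
    refine (EMaCAux.dot_norm_le _ _).trans ?_
    have h2 : ∑ s, ‖(starRingEnd ℂ) (U β' s)‖ ^ 2 = ∑ s, ‖U β' s‖ ^ 2 := by
      simp [RCLike.norm_conj]
    rw [h2]
    calc Real.sqrt (∑ s, ‖U α s‖ ^ 2) * Real.sqrt (∑ s, ‖U β' s‖ ^ 2)
        ≤ Real.sqrt K * Real.sqrt K :=
          mul_le_mul (Real.sqrt_le_sqrt (hUdiag α)) (Real.sqrt_le_sqrt (hUdiag β'))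
            (Real.sqrt_nonneg _) (Real.sqrt_nonneg _)
    _ = K := Real.mul_self_sqrt hK0
  have hQentry : ∀ δ γ, ‖Q δ γ‖ ≤ K := by
    intro δ γ
    have he : Q δ γ = (fun s => V δ s) ⬝ᵥ (fun s => (starRingEnd ℂ) (V γ s)) := by
      rw [hQ, Matrix.mul_apply]
      exact Finset.sum_congr rfl fun s _ => by
        rw [Matrix.conjTranspose_apply, RCLike.star_def]
    rw [he]
    refine (EMaCAux.dot_norm_le _ _).trans ?_
    have h2 : ∑ s, ‖(starRingEnd ℂ) (V γ s)‖ ^ 2 = ∑ s, ‖V γ s‖ ^ 2 := by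
      simp [RCLike.norm_conj]
    rw [h2]
    calc Real.sqrt (∑ s, ‖V δ s‖ ^ 2) * Real.sqrt (∑ s, ‖V γ s‖ ^ 2)
        ≤ Real.sqrt K * Real.sqrt K :=
          mul_le_mul (Real.sqrt_le_sqrt (hVdiag δ)) (Real.sqrt_le_sqrt (hVdiag γ))
            (Real.sqrt_nonneg _) (Real.sqrt_nonneg _)
    _ = K := Real.mul_self_sqrt hK0
  have hProwsq : ∀ α, ∑ β', ‖P α β'‖ ^ 2 ≤ K := by
    intro α
    have hPP : P * Pᴴ = P := by
      rw [hP, Matrix.conjTranspose_mul, Matrix.conjTranspose_conjTranspose]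
      calc U * Uᴴ * (U * Uᴴ) = U * ((Uᴴ * U) * Uᴴ) := by simp only [Matrix.mul_assoc]
      _ = U * Uᴴ := by rw [hUo, Matrix.one_mul]
    have h1 : ∑ β', ‖P α β'‖ ^ 2 = ((P * Pᴴ) α α).re := by
      rw [Matrix.mul_apply]
      simp only [Matrix.conjTranspose_apply, RCLike.star_def, Complex.re_sum]
      exact (Finset.sum_congr rfl fun β' _ => (EMaCAux.mul_conj_self_re _).symm)
    rw [h1, hPP]
    have h2 : (P α α).re = ∑ s, ‖U α s‖ ^ 2 := by
      rw [hP, Matrix.mul_apply]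
      simp only [Matrix.conjTranspose_apply, RCLike.star_def, Complex.re_sum]
      exact Finset.sum_congr rfl fun s _ => EMaCAux.mul_conj_self_re _
    rw [h2]
    exact hUdiag α
  have hQcolsq : ∀ γ, ∑ δ, ‖Q δ γ‖ ^ 2 ≤ K := by
    intro γ
    have hQQ : Qᴴ * Q = Q := by
      rw [hQ, Matrix.conjTranspose_mul, Matrix.conjTranspose_conjTranspose]
      calc V * Vᴴ * (V * Vᴴ) = V * ((Vᴴ * V) * Vᴴ) := by simp only [Matrix.mul_assoc]
      _ = V * Vᴴ := by rw [hVo, Matrix.one_mul]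
    have h1 : ∑ δ, ‖Q δ γ‖ ^ 2 = ((Qᴴ * Q) γ γ).re := by
      rw [Matrix.mul_apply]
      simp only [Matrix.conjTranspose_apply, RCLike.star_def, Complex.re_sum]
      exact (Finset.sum_congr rfl fun δ _ => (EMaCAux.conj_mul_self_re _).symm)
    rw [h1, hQQ]
    have h2 : (Q γ γ).re = ∑ s, ‖V γ s‖ ^ 2 := by
      rw [hQ, Matrix.mul_apply]
      simp only [Matrix.conjTranspose_apply, RCLike.star_def, Complex.re_sum]
      exact Finset.sum_congr rfl fun s _ => EMaCAux.mul_conj_self_re _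
    rw [h2]
    exact hVdiag γ
  -- combinatorial part
  set wa : ℝ := (wcount n1 n2 k1 k2 a : ℝ) with hwadef
  set wb : ℝ := (wcount n1 n2 k1 k2 b : ℝ) with hwbdef
  have hwa : 0 < wa := by
    rw [hwadef]; exact_mod_cast EMaCAux.wcount_pos hk1 hk1' hk2 hk2' a
  have hwb : 0 < wb := by
    rw [hwbdef]; exact_mod_cast EMaCAux.wcount_pos hk1 hk1' hk2 hk2' b
  set sa : ℝ := (Real.sqrt wa)⁻¹ with hsadef
  set sb : ℝ := (Real.sqrt wb)⁻¹ with hsbdef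
  have hsa0 : 0 ≤ sa := by rw [hsadef]; positivity
  set Aa := Amat n1 n2 k1 k2 a with hAa
  set Ab := Amat n1 n2 k1 k2 b with hAb
  have hE1 : ∀ α γ, ‖(P * Aa) α γ‖ ≤ K * sa := by
    intro α γ
    rw [Matrix.mul_apply]
    calc ‖∑ β', P α β' * Aa β' γ‖ ≤ ∑ β', ‖P α β' * Aa β' γ‖ := norm_sum_le _ _
    _ = ∑ β', ‖P α β'‖ * ‖Aa β' γ‖ := Finset.sum_congr rfl fun β' _ => norm_mul _ _
    _ ≤ ∑ β', K * ‖Aa β' γ‖ := Finset.sum_le_sum fun β' _ =>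
        mul_le_mul_of_nonneg_right (hPentry α β') (norm_nonneg _)
    _ = K * ∑ β', ‖Aa β' γ‖ := by rw [Finset.mul_sum]
    _ ≤ K * sa := mul_le_mul_of_nonneg_left (EMaCAux.sum_col_Amat a γ) hK0
  have hE2 : ∀ α γ, ‖(Aa * Q) α γ‖ ≤ K * sa := by
    intro α γ
    rw [Matrix.mul_apply]
    calc ‖∑ δ, Aa α δ * Q δ γ‖ ≤ ∑ δ, ‖Aa α δ * Q δ γ‖ := norm_sum_le _ _
    _ = ∑ δ, ‖Aa α δ‖ * ‖Q δ γ‖ := Finset.sum_congr rfl fun δ _ => norm_mul _ _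
    _ ≤ ∑ δ, ‖Aa α δ‖ * K := Finset.sum_le_sum fun δ _ =>
        mul_le_mul_of_nonneg_left (hQentry δ γ) (norm_nonneg _)
    _ = (∑ δ, ‖Aa α δ‖) * K := by rw [Finset.sum_mul]
    _ ≤ sa * K := mul_le_mul_of_nonneg_right (EMaCAux.sum_row_Amat a α) hK0
    _ = K * sa := mul_comm _ _
  have hE3 : ∀ α γ, ‖(P * Aa * Q) α γ‖ ≤ K * sa := by
    intro α γ
    have step1 : ‖(P * Aa * Q) α γ‖ ≤ ∑ δ, ∑ β', ‖P α β'‖ * ‖Aa β' δ‖ * ‖Q δ γ‖ := by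
      rw [Matrix.mul_apply]
      calc ‖∑ δ, (P * Aa) α δ * Q δ γ‖ ≤ ∑ δ, ‖(P * Aa) α δ * Q δ γ‖ := norm_sum_le _ _
      _ = ∑ δ, ‖(P * Aa) α δ‖ * ‖Q δ γ‖ := Finset.sum_congr rfl fun δ _ => norm_mul _ _
      _ ≤ ∑ δ, (∑ β', ‖P α β'‖ * ‖Aa β' δ‖) * ‖Q δ γ‖ := by
          refine Finset.sum_le_sum fun δ _ => mul_le_mul_of_nonneg_right ?_ (norm_nonneg _)
          rw [Matrix.mul_apply]
          calc ‖∑ β', P α β' * Aa β' δ‖ ≤ ∑ β', ‖P α β' * Aa β' δ‖ := norm_sum_le _ _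
          _ = ∑ β', ‖P α β'‖ * ‖Aa β' δ‖ := Finset.sum_congr rfl fun β' _ => norm_mul _ _
      _ = ∑ δ, ∑ β', ‖P α β'‖ * ‖Aa β' δ‖ * ‖Q δ γ‖ := by
          refine Finset.sum_congr rfl fun δ _ => ?_
          rw [Finset.sum_mul]
    have step2 : ∑ δ, ∑ β', ‖P α β'‖ * ‖Aa β' δ‖ * ‖Q δ γ‖
        = sa * ∑ x ∈ Finset.univ.filter
            (fun x : (Fin k1 × Fin k2) × (Fin (n1-k1+1) × Fin (n2-k2+1)) =>
              x.1.1.1 + x.2.1.1 = (a.1 : ℕ) ∧ x.1.2.1 + x.2.2.1 = (a.2 : ℕ)),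
            ‖P α x.1‖ * ‖Q x.2 γ‖ := by
      rw [Finset.sum_comm]
      have e1 : ∀ β' δ, ‖P α β'‖ * ‖Aa β' δ‖ * ‖Q δ γ‖
          = if (β'.1.1 + δ.1.1 = (a.1 : ℕ) ∧ β'.2.1 + δ.2.1 = (a.2 : ℕ)) then
              sa * (‖P α β'‖ * ‖Q δ γ‖) else 0 := by
        intro β' δ
        rw [hAa, EMaCAux.norm_Amat]
        split_ifs with h
        · rw [hsadef, hwadef]; ring
        · ring
      calc ∑ β', ∑ δ, ‖P α β'‖ * ‖Aa β' δ‖ * ‖Q δ γ‖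
          = ∑ β', ∑ δ, if (β'.1.1 + δ.1.1 = (a.1 : ℕ) ∧ β'.2.1 + δ.2.1 = (a.2 : ℕ)) then
              sa * (‖P α β'‖ * ‖Q δ γ‖) else 0 :=
            Finset.sum_congr rfl fun β' _ => Finset.sum_congr rfl fun δ _ => e1 β' δ
      _ = ∑ x : (Fin k1 × Fin k2) × (Fin (n1-k1+1) × Fin (n2-k2+1)),
            if (x.1.1.1 + x.2.1.1 = (a.1 : ℕ) ∧ x.1.2.1 + x.2.2.1 = (a.2 : ℕ)) then
              sa * (‖P α x.1‖ * ‖Q x.2 γ‖) else 0 :=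
            (Fintype.sum_prod_type
              (f := fun x : (Fin k1 × Fin k2) × (Fin (n1-k1+1) × Fin (n2-k2+1)) =>
                if (x.1.1.1 + x.2.1.1 = (a.1 : ℕ) ∧ x.1.2.1 + x.2.2.1 = (a.2 : ℕ)) then
                  sa * (‖P α x.1‖ * ‖Q x.2 γ‖) else 0)).symm
      _ = ∑ x ∈ Finset.univ.filter
            (fun x : (Fin k1 × Fin k2) × (Fin (n1-k1+1) × Fin (n2-k2+1)) =>
              x.1.1.1 + x.2.1.1 = (a.1 : ℕ) ∧ x.1.2.1 + x.2.2.1 = (a.2 : ℕ)),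
            sa * (‖P α x.1‖ * ‖Q x.2 γ‖) := (Finset.sum_filter _ _).symm
      _ = sa * ∑ x ∈ Finset.univ.filter
            (fun x : (Fin k1 × Fin k2) × (Fin (n1-k1+1) × Fin (n2-k2+1)) =>
              x.1.1.1 + x.2.1.1 = (a.1 : ℕ) ∧ x.1.2.1 + x.2.2.1 = (a.2 : ℕ)),
            ‖P α x.1‖ * ‖Q x.2 γ‖ := by rw [Finset.mul_sum]
    have step3 : ∑ x ∈ Finset.univ.filter
            (fun x : (Fin k1 × Fin k2) × (Fin (n1-k1+1) × Fin (n2-k2+1)) =>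
              x.1.1.1 + x.2.1.1 = (a.1 : ℕ) ∧ x.1.2.1 + x.2.2.1 = (a.2 : ℕ)),
            ‖P α x.1‖ * ‖Q x.2 γ‖ ≤ K := by
      have hCS := EMaCAux.cs_filter_sum
        (Finset.univ.filter
          (fun x : (Fin k1 × Fin k2) × (Fin (n1-k1+1) × Fin (n2-k2+1)) =>
            x.1.1.1 + x.2.1.1 = (a.1 : ℕ) ∧ x.1.2.1 + x.2.2.1 = (a.2 : ℕ)))
        (fun x hx y hy hxy => by
          simp only [Finset.mem_filter] at hx hy
          refine Prod.ext hxy (Prod.ext (Fin.ext ?_) (Fin.ext ?_)) <;>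
            (rw [hxy] at hx; omega))
        (fun x hx y hy hxy => by
          simp only [Finset.mem_filter] at hx hy
          refine Prod.ext (Prod.ext (Fin.ext ?_) (Fin.ext ?_)) hxy <;>
            (rw [hxy] at hx; omega))
        (fun β' => ‖P α β'‖) (fun δ => ‖Q δ γ‖)
        (fun _ => norm_nonneg _) (fun _ => norm_nonneg _)
      refine hCS.trans ?_
      calc Real.sqrt (∑ β', ‖P α β'‖ ^ 2) * Real.sqrt (∑ δ, ‖Q δ γ‖ ^ 2)
          ≤ Real.sqrt K * Real.sqrt K :=
            mul_le_mul (Real.sqrt_le_sqrt (hProwsq α)) (Real.sqrt_le_sqrt (hQcolsq γ))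
              (Real.sqrt_nonneg _) (Real.sqrt_nonneg _)
      _ = K := Real.mul_self_sqrt hK0
    calc ‖(P * Aa * Q) α γ‖ ≤ ∑ δ, ∑ β', ‖P α β'‖ * ‖Aa β' δ‖ * ‖Q δ γ‖ := step1
    _ = sa * ∑ x ∈ Finset.univ.filter
          (fun x : (Fin k1 × Fin k2) × (Fin (n1-k1+1) × Fin (n2-k2+1)) =>
            x.1.1.1 + x.2.1.1 = (a.1 : ℕ) ∧ x.1.2.1 + x.2.2.1 = (a.2 : ℕ)),
          ‖P α x.1‖ * ‖Q x.2 γ‖ := step2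
    _ ≤ sa * K := mul_le_mul_of_nonneg_left step3 hsa0
    _ = K * sa := mul_comm _ _
  -- entrywise bound on projT
  have hM : ∀ α γ, ‖projT U V Aa α γ‖ ≤ 3 * (K * sa) := by
    intro α γ
    have he : projT U V Aa α γ = (P * Aa) α γ + (Aa * Q) α γ - (P * Aa * Q) α γ := by
      rw [projT, hP, hQ]
      simp [Matrix.sub_apply, Matrix.add_apply, Matrix.mul_assoc]
    rw [he]
    calc ‖(P * Aa) α γ + (Aa * Q) α γ - (P * Aa * Q) α γ‖
        ≤ ‖(P * Aa) α γ + (Aa * Q) α γ‖ + ‖(P * Aa * Q) α γ‖ := norm_sub_le _ _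
    _ ≤ ‖(P * Aa) α γ‖ + ‖(Aa * Q) α γ‖ + ‖(P * Aa * Q) α γ‖ := by
        have := norm_add_le ((P * Aa) α γ) ((Aa * Q) α γ)
        linarith
    _ ≤ K * sa + K * sa + K * sa := by
        have := hE1 α γ; have := hE2 α γ; have := hE3 α γ
        linarith [hE1 α γ, hE2 α γ, hE3 α γ]
    _ = 3 * (K * sa) := by ring
  -- final assembly
  have hfin : ‖finner Ab (projT U V Aa)‖ ≤ (wb * sb) * (3 * (K * sa)) := by
    rw [finner]
    calc ‖∑ α, ∑ γ, (starRingEnd ℂ) (Ab α γ) * projT U V Aa α γ‖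
        ≤ ∑ α, ∑ γ, ‖(starRingEnd ℂ) (Ab α γ) * projT U V Aa α γ‖ := by
          refine (norm_sum_le _ _).trans (Finset.sum_le_sum fun α _ => norm_sum_le _ _)
    _ = ∑ α, ∑ γ, ‖Ab α γ‖ * ‖projT U V Aa α γ‖ := by
        refine Finset.sum_congr rfl fun α _ => Finset.sum_congr rfl fun γ _ => ?_
        rw [norm_mul, RCLike.norm_conj]
    _ ≤ ∑ α, ∑ γ, ‖Ab α γ‖ * (3 * (K * sa)) := by
        refine Finset.sum_le_sum fun α _ => Finset.sum_le_sum fun γ _ =>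
          mul_le_mul_of_nonneg_left (hM α γ) (norm_nonneg _)
    _ = (∑ α, ∑ γ, ‖Ab α γ‖) * (3 * (K * sa)) := by
        rw [Finset.sum_mul]
        exact Finset.sum_congr rfl fun α _ => (Finset.sum_mul _ _ _).symm
    _ = (wb * sb) * (3 * (K * sa)) := by
        rw [hAb, EMaCAux.sum_tot_Amat b, ← hwbdef, ← hsbdef]
  refine hfin.trans (le_of_eq ?_)
  have hsq : Real.sqrt (wb / wa) = Real.sqrt wb * sa := by
    rw [Real.sqrt_div hwb.le, div_eq_mul_inv, hsadef]
  have hwbsb : wb * sb = Real.sqrt wb := by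
    rw [hsbdef]
    rw [← Real.mul_self_sqrt hwb.le]
    field_simp
    rw [Real.sqrt_sq (Real.sqrt_nonneg _)]
  rw [hwbsb, hsq, hKdef]
  ring
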